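/- Let 1 < α < 2, λ ≥ 0, h > 0, and let γ₁ = α/2 + γ₃, γ₂ = (2-α)/2 - 2γ₃ for a real parameter γ₃. Define g_0 = γ₁ ω_0^α e^{hλ}, g_1 = γ₁ ω_1^α + γ₂ ω_0^α, and g_k = (γ₁ ω_k^α + γ₂ ω_{k-1}^α + γ₃ ω_{k-2}^α) e^{-(k-1)hλ} for k ≥ 2. Then the series ∑_{k=0}^∞ g_k converges to φ(λ) = (γ₁ e^{hλ} + γ₂ + γ₃ e^{-hλ})(1 - e^{-hλ})^α. -/

import Mathlib

noncomputable def genBinom (α : ℝ) (k : ℕ) : ℝ :=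
  (∏ i ∈ Finset.range k, (α - i)) / (Nat.factorial k)

noncomputable def omegaCoeff (α : ℝ) (k : ℕ) : ℝ := (-1 : ℝ) ^ k * genBinom α k

noncomputable def gCoeff (α lam h γ₁ γ₂ γ₃ : ℝ) (k : ℕ) : ℝ :=
  if k = 0 then γ₁ * omegaCoeff α 0 * Real.exp (h * lam)
  else if k = 1 then γ₁ * omegaCoeff α 1 + γ₂ * omegaCoeff α 0
  else (γ₁ * omegaCoeff α k + γ₂ * omegaCoeff α (k - 1) + γ₃ * omegaCoeff α (k - 2)) *
      Real.exp (-((k : ℝ) - 1) * h * lam)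

noncomputable def phiFun (α lam h γ₁ γ₂ γ₃ : ℝ) : ℝ :=
  (γ₁ * Real.exp (h * lam) + γ₂ + γ₃ * Real.exp (-(h * lam))) *
    (1 - Real.exp (-(h * lam))) ^ α

lemma genBinom_zero (α : ℝ) : genBinom α 0 = 1 := by simp [genBinom]

lemma genBinom_succ (α : ℝ) (n : ℕ) :
    genBinom α (n + 1) = (α - n) / (n + 1) * genBinom α n := by
  have h1 : ((n : ℝ) + 1) ≠ 0 := by positivity
  have h2 : ((Nat.factorial n : ℕ) : ℝ) ≠ 0 := by
    exact_mod_cast Nat.factorial_ne_zero n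
  simp only [genBinom, Finset.prod_range_succ, Nat.factorial_succ]
  push_cast
  field_simp

lemma genBinom_succ' (α : ℝ) (n : ℕ) :
    genBinom α (n + 1) = α / (n + 1) * genBinom (α - 1) n := by
  have h1 : ((n : ℝ) + 1) ≠ 0 := by positivity
  have h2 : ((Nat.factorial n : ℕ) : ℝ) ≠ 0 := by
    exact_mod_cast Nat.factorial_ne_zero n
  have h : (∏ i ∈ Finset.range (n + 1), (α - (i : ℕ)))
      = (∏ i ∈ Finset.range n, ((α - 1) - (i : ℕ))) * α := by
    rw [Finset.prod_range_succ' (fun i => α - (i : ℕ)) n]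
    congr 1
    · exact Finset.prod_congr rfl (fun i _ => by push_cast; ring)
    · simp
  simp only [genBinom, h, Nat.factorial_succ]
  push_cast
  field_simp

lemma omegaCoeff_zero (α : ℝ) : omegaCoeff α 0 = 1 := by simp [omegaCoeff, genBinom_zero]

lemma omega_succ (α : ℝ) (n : ℕ) :
    ((n : ℝ) + 1) * omegaCoeff α (n + 1) = ((n : ℝ) - α) * omegaCoeff α n := by
  have h1 : ((n : ℝ) + 1) ≠ 0 := by positivity
  simp only [omegaCoeff, pow_succ, genBinom_succ]
  field_simp
  ring

lemma sum_omega (α : ℝ) (n : ℕ) :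
    ∑ k ∈ Finset.range (n + 1), omegaCoeff α k = (-1 : ℝ) ^ n * genBinom (α - 1) n := by
  induction n with
  | zero => simp [omegaCoeff, genBinom_zero]
  | succ n ih =>
    have h1 : ((n : ℝ) + 1) ≠ 0 := by positivity
    rw [Finset.sum_range_succ, ih]
    simp only [omegaCoeff, genBinom_succ' α n, genBinom_succ (α - 1) n, pow_succ]
    field_simp
    ring

lemma genBinom_sign_bound {β : ℝ} (hb0 : 0 < β) (hb1 : β < 1) (n : ℕ) :
    0 ≤ (-1 : ℝ) ^ n * genBinom β (n + 1) ∧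
      (-1 : ℝ) ^ n * genBinom β (n + 1) ≤ β / (n + 1) := by
  induction n with
  | zero =>
    constructor
    · simp [genBinom]; linarith
    · simp [genBinom]
  | succ n ih =>
    obtain ⟨h0, h1⟩ := ih
    have hrec : genBinom β (n + 2) = (β - ((n : ℝ) + 1)) / ((n : ℝ) + 2) * genBinom β (n + 1) := by
      have := genBinom_succ β (n + 1)
      push_cast at this
      convert this using 3 <;> push_cast <;> ring
    have heq : (-1 : ℝ) ^ (n + 1) * genBinom β (n + 2)
        = (((n : ℝ) + 1 - β) / ((n : ℝ) + 2)) * ((-1 : ℝ) ^ n * genBinom β (n + 1)) := by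
      rw [hrec, pow_succ]; ring
    have hc0 : 0 ≤ ((n : ℝ) + 1 - β) / ((n : ℝ) + 2) := by
      apply div_nonneg <;> [linarith; positivity]
    constructor
    · rw [heq]; exact mul_nonneg hc0 h0
    · rw [heq]
      have hc1 : (((n : ℝ) + 1 - β) / ((n : ℝ) + 2)) ≤ ((n : ℝ) + 1) / ((n : ℝ) + 2) := by
        apply (div_le_div_iff_of_pos_right (by positivity)).mpr; linarith
      have hle : (((n : ℝ) + 1 - β) / ((n : ℝ) + 2)) * ((-1 : ℝ) ^ n * genBinom β (n + 1))
          ≤ (((n : ℝ) + 1) / ((n : ℝ) + 2)) * (β / ((n : ℝ) + 1)) :=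
        mul_le_mul hc1 h1 h0 (by positivity)
      calc (((n : ℝ) + 1 - β) / ((n : ℝ) + 2)) * ((-1 : ℝ) ^ n * genBinom β (n + 1))
          ≤ (((n : ℝ) + 1) / ((n : ℝ) + 2)) * (β / ((n : ℝ) + 1)) := hle
        _ = β / ((n : ℝ) + 2) := by
            field_simp
        _ = β / (((n : ℕ) + 1 : ℕ) + 1 : ℝ) := by push_cast; ring

lemma genBinom_neg_sign {δ : ℝ} (h0 : -1 < δ) (h1 : δ < 0) (n : ℕ) :
    0 ≤ (-1 : ℝ) ^ n * genBinom δ n := by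
  induction n with
  | zero => simp [genBinom_zero]
  | succ n ih =>
    have heq : (-1 : ℝ) ^ (n + 1) * genBinom δ (n + 1)
        = (((n : ℝ) - δ) / ((n : ℝ) + 1)) * ((-1 : ℝ) ^ n * genBinom δ n) := by
      rw [genBinom_succ, pow_succ]; ring
    rw [heq]
    apply mul_nonneg _ ih
    apply div_nonneg _ (by positivity)
    have : (0 : ℝ) ≤ (n : ℝ) := Nat.cast_nonneg n
    linarith

lemma summable_abs_genBinom {β : ℝ} (hb0 : 0 < β) (hb1 : β < 1) :
    Summable (fun k : ℕ => |genBinom β k|) := by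
  apply summable_of_sum_range_le (c := 2) (fun n => abs_nonneg _)
  intro m
  match m with
  | 0 => simp
  | (n + 1) =>
    have habs : ∀ j : ℕ, |genBinom β (j + 1)| = (-1 : ℝ) ^ j * genBinom β (j + 1) := by
      intro j
      have := abs_of_nonneg (genBinom_sign_bound hb0 hb1 j).1
      rwa [abs_mul, abs_pow, abs_neg, abs_one, one_pow, one_mul] at this
    have hsum := sum_omega β n
    have hpos : 0 ≤ (-1 : ℝ) ^ n * genBinom (β - 1) n :=
      genBinom_neg_sign (by linarith) (by linarith) n
    rw [Finset.sum_range_succ' (fun k => |genBinom β k|) n]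
    have h2 : ∑ i ∈ Finset.range n, |genBinom β (i + 1)|
        = 1 - (-1 : ℝ) ^ n * genBinom (β - 1) n := by
      have : ∑ k ∈ Finset.range (n + 1), omegaCoeff β k
          = omegaCoeff β 0 + ∑ i ∈ Finset.range n, omegaCoeff β (i + 1) := by
        rw [Finset.sum_range_succ' (fun k => omegaCoeff β k) n]; ring
      rw [hsum] at this
      have h3 : ∑ i ∈ Finset.range n, omegaCoeff β (i + 1)
          = -∑ i ∈ Finset.range n, |genBinom β (i + 1)| := by
        rw [← Finset.sum_neg_distrib]
        apply Finset.sum_congr rfl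
        intro i _
        rw [habs i]
        simp only [omegaCoeff, pow_succ]
        ring
      rw [omegaCoeff_zero, h3] at this
      linarith
    rw [h2, genBinom_zero]
    simp only [abs_one]
    linarith

lemma summable_abs_genBinom' {α : ℝ} (hα1 : 1 < α) (hα2 : α < 2) :
    Summable (fun k : ℕ => |genBinom α k|) := by
  rw [← summable_nat_add_iff 1]
  have h := (summable_abs_genBinom (β := α - 1) (by linarith) (by linarith)).mul_left α
  apply h.of_nonneg_of_le (fun n => abs_nonneg _)
  intro n
  rw [genBinom_succ', abs_mul]
  have : |α / ((n : ℝ) + 1)| ≤ α := by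
    rw [abs_of_nonneg (by positivity)]
    rw [div_le_iff₀ (by positivity)]
    nlinarith [Nat.cast_nonneg (α := ℝ) n]
  calc |α / ((n : ℝ) + 1)| * |genBinom (α - 1) n| ≤ α * |genBinom (α - 1) n| :=
        mul_le_mul_of_nonneg_right this (abs_nonneg _)
    _ = α * |genBinom (α - 1) n| := rfl

lemma summable_u {α : ℝ} (hα1 : 1 < α) (hα2 : α < 2) :
    Summable (fun k : ℕ => (k : ℝ) * |genBinom α k|) := by
  rw [← summable_nat_add_iff 1]
  have h := (summable_abs_genBinom (β := α - 1) (by linarith) (by linarith)).mul_left α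
  apply h.of_nonneg_of_le (fun n => by positivity)
  intro n
  rw [genBinom_succ', abs_mul]
  have h1 : |α / ((n : ℝ) + 1)| = α / ((n : ℝ) + 1) := abs_of_nonneg (by positivity)
  push_cast
  rw [h1]
  rw [show ((n : ℝ) + 1) * (α / ((n : ℝ) + 1) * |genBinom (α - 1) n|)
      = α * |genBinom (α - 1) n| * (((n : ℝ) + 1) / ((n : ℝ) + 1)) by ring]
  rw [div_self (by positivity)]
  ring_nf
  exact le_rfl

lemma abs_omega (α : ℝ) (k : ℕ) : |omegaCoeff α k| = |genBinom α k| := by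
  simp [omegaCoeff, abs_mul, abs_pow]

lemma summable_omega_pow {α : ℝ} (hα1 : 1 < α) (hα2 : α < 2) {y : ℝ} (hy : |y| ≤ 1) :
    Summable (fun k : ℕ => omegaCoeff α k * y ^ k) := by
  apply Summable.of_norm_bounded (summable_abs_genBinom' hα1 hα2)
  intro k
  rw [Real.norm_eq_abs, abs_mul, abs_omega, abs_pow]
  calc |genBinom α k| * |y| ^ k ≤ |genBinom α k| * 1 := by
        apply mul_le_mul_of_nonneg_left _ (abs_nonneg _)
        exact pow_le_one₀ (abs_nonneg y) hy
    _ = |genBinom α k| := mul_one _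

set_option maxHeartbeats 2000000 in
lemma key {α : ℝ} (hα1 : 1 < α) (hα2 : α < 2) {x : ℝ} (hx0 : 0 < x) (hx1 : x ≤ 1) :
    HasSum (fun k : ℕ => omegaCoeff α k * x ^ k) ((1 - x) ^ α) := by
  have hβ0 : (0:ℝ) < α - 1 := by linarith
  have hβ1 : α - 1 < 1 := by linarith
  rcases eq_or_lt_of_le hx1 with heq | hlt
  · -- case x = 1
    subst heq
    have hz : ((1:ℝ) - 1) ^ α = (0:ℝ) := by
      rw [sub_self]
      exact Real.zero_rpow (by linarith)
    rw [hz]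
    simp only [one_pow, mul_one]
    have hsummable : Summable (fun k => omegaCoeff α k) := by
      have := summable_omega_pow hα1 hα2 (y := 1) (by norm_num)
      simpa using this
    rw [hsummable.hasSum_iff_tendsto_nat]
    have htail : Filter.Tendsto (fun n : ℕ => (-1:ℝ)^n * genBinom (α-1) n)
        Filter.atTop (nhds 0) := by
      apply squeeze_zero_norm' ?_ (tendsto_const_div_atTop_nhds_zero_nat (α - 1))
      filter_upwards [Filter.eventually_ge_atTop 1] with n hn
      obtain ⟨m, rfl⟩ := Nat.exists_eq_add_of_le hn
      rw [add_comm 1 m]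
      obtain ⟨hs1, hs2⟩ := genBinom_sign_bound hβ0 hβ1 m
      have habs : |genBinom (α-1) (m+1)| = (-1:ℝ)^m * genBinom (α-1) (m+1) := by
        rw [← abs_of_nonneg hs1, abs_mul, abs_pow, abs_neg, abs_one, one_pow, one_mul]
      rw [Real.norm_eq_abs, abs_mul, abs_pow, abs_neg, abs_one, one_pow, one_mul, habs]
      push_cast
      exact hs2
    rw [← Filter.tendsto_add_atTop_iff_nat 1]
    have heqfun : (fun n : ℕ => ∑ i ∈ Finset.range (n+1), omegaCoeff α i)
        = fun n => (-1:ℝ)^n * genBinom (α-1) n := funext (sum_omega α)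
    rw [heqfun]
    exact htail
  · -- case x < 1
    have hmem : x ∈ Set.Ioo (-1:ℝ) 1 := ⟨by linarith, hlt⟩
    have hxabs : |x| ≤ 1 := by rw [abs_le]; constructor <;> linarith
    have hopen : IsOpen (Set.Ioo (-1:ℝ) 1) := isOpen_Ioo
    have hconn : IsPreconnected (Set.Ioo (-1:ℝ) 1) := (convex_Ioo (-1:ℝ) 1).isPreconnected
    set u : ℕ → ℝ := fun k => (k:ℝ) * |genBinom α k| with hu
    have hus : Summable u := summable_u hα1 hα2
    set g : ℕ → ℝ → ℝ := fun k y => omegaCoeff α k * y ^ k with hgdef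
    set g' : ℕ → ℝ → ℝ := fun k y => omegaCoeff α k * ((k:ℝ) * y ^ (k-1)) with hg'def
    have hderiv : ∀ (k : ℕ) (y : ℝ), HasDerivAt (g k) (g' k y) y := fun k y =>
      (hasDerivAt_pow k y).const_mul (omegaCoeff α k)
    have hbound : ∀ (k : ℕ) (y : ℝ), y ∈ Set.Ioo (-1:ℝ) 1 → ‖g' k y‖ ≤ u k := by
      intro k y hy
      have hyabs : |y| ≤ 1 := by
        rw [abs_le]; exact ⟨le_of_lt hy.1, le_of_lt hy.2⟩
      simp only [hg'def, hu, Real.norm_eq_abs]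
      rw [abs_mul, abs_omega, abs_mul, abs_pow, Nat.abs_cast]
      calc |genBinom α k| * ((k:ℝ) * |y|^(k-1)) ≤ |genBinom α k| * ((k:ℝ) * 1) := by
            apply mul_le_mul_of_nonneg_left _ (abs_nonneg _)
            exact mul_le_mul_of_nonneg_left (pow_le_one₀ (abs_nonneg _) hyabs) (Nat.cast_nonneg k)
        _ = (k:ℝ) * |genBinom α k| := by ring
    have h0t : (0:ℝ) ∈ Set.Ioo (-1:ℝ) 1 := by constructor <;> norm_num
    have hg0 : Summable (fun k => g k 0) := by
      apply summable_of_ne_finset_zero (s := ({0} : Finset ℕ))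
      intro k hk
      simp only [hgdef]
      rw [zero_pow (by simpa using hk), mul_zero]
    have hFderiv : ∀ y ∈ Set.Ioo (-1:ℝ) 1,
        HasDerivAt (fun z => ∑' k, g k z) (∑' k, g' k y) y :=
      fun y hy => hasDerivAt_tsum_of_isPreconnected hus hopen hconn
        (fun k y _ => hderiv k y) hbound h0t hg0 hy
    have hODE : ∀ y ∈ Set.Ioo (-1:ℝ) 1,
        (1 - y) * (∑' k, g' k y) + α * (∑' k, g k y) = 0 := by
      intro y hy
      have hyabs : |y| ≤ 1 := by
        rw [abs_le]; exact ⟨le_of_lt hy.1, le_of_lt hy.2⟩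
      have hsF : HasSum (fun k => g k y) (∑' k, g k y) :=
        (summable_omega_pow hα1 hα2 hyabs).hasSum
      have hsDs : Summable (fun k => g' k y) :=
        Summable.of_norm_bounded hus (fun k => hbound k y hy)
      have hsD : HasSum (fun k => g' k y) (∑' k, g' k y) := hsDs.hasSum
      have hshift : HasSum (fun n => g' (n+1) y) (∑' k, g' k y) := by
        have hinj : Function.Injective (fun n : ℕ => n + 1) := add_left_injective 1
        have hvanish : ∀ m, m ∉ Set.range (fun n : ℕ => n + 1) → g' m y = 0 := by
          intro m hm
          match m with
          | 0 => simp [hg'def]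
          | (n+1) => exact absurd ⟨n, rfl⟩ hm
        exact (Function.Injective.hasSum_iff hinj hvanish).mpr hsD
      have hyD : HasSum (fun n : ℕ => (n:ℝ) * (omegaCoeff α n * y ^ n))
          ((∑' k, g' k y) * y) := by
        have h2 := hsD.mul_right y
        have heqf : (fun k => g' k y * y)
            = fun n : ℕ => (n:ℝ) * (omegaCoeff α n * y ^ n) := by
          funext k
          cases k with
          | zero => simp [hg'def]
          | succ m =>
            simp only [hg'def, Nat.add_sub_cancel]
            push_cast
            rw [pow_succ]
            ring
        rwa [heqf] at h2
      have hkey : (fun n => g' (n+1) y)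
          = fun n : ℕ => ((n:ℝ) - α) * (omegaCoeff α n * y ^ n) := by
        funext n
        simp only [hg'def, Nat.add_sub_cancel]
        push_cast
        calc omegaCoeff α (n+1) * (((n:ℝ)+1) * y^n)
            = (((n:ℝ)+1) * omegaCoeff α (n+1)) * y^n := by ring
          _ = (((n:ℝ) - α) * omegaCoeff α n) * y^n := by rw [omega_succ]
          _ = ((n:ℝ) - α) * (omegaCoeff α n * y^n) := by ring
      rw [hkey] at hshift
      have hsub : HasSum (fun n : ℕ => ((n:ℝ) - α) * (omegaCoeff α n * y ^ n))
          ((∑' k, g' k y) * y - α * (∑' k, g k y)) := by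
        have h2 := hyD.sub (hsF.mul_left α)
        have heqf : (fun n : ℕ => (n:ℝ) * (omegaCoeff α n * y ^ n) - α * g n y)
            = fun n : ℕ => ((n:ℝ) - α) * (omegaCoeff α n * y ^ n) := by
          funext n
          simp only [hgdef]
          ring
        rwa [heqf] at h2
      have huniq := hshift.unique hsub
      linear_combination huniq
    have hHderiv : ∀ y ∈ Set.Ioo (-1:ℝ) 1,
        HasDerivAt (fun z => (∑' k, g k z) * (1 - z) ^ (-α)) 0 y := by
      intro y hy
      have hy1 : 0 < 1 - y := by linarith [hy.2]
      have hrp : HasDerivAt (fun w : ℝ => w ^ (-α)) (-α * (1 - y) ^ (-α - 1)) (1 - y) :=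
        Real.hasDerivAt_rpow_const (Or.inl (ne_of_gt hy1))
      have hsubd : HasDerivAt (fun z : ℝ => 1 - z) (-1 : ℝ) y := by
        simpa using (hasDerivAt_id y).const_sub 1
      have h1 : HasDerivAt (fun z : ℝ => (1 - z) ^ (-α))
          (-α * (1 - y) ^ (-α - 1) * (-1)) y := hrp.comp y hsubd
      have h2 := (hFderiv y hy).mul h1
      have hsplit : (1 - y) ^ (-α) = (1 - y) ^ (-α - 1) * (1 - y) := by
        rw [← Real.rpow_add_one (ne_of_gt hy1)]
        norm_num
      refine h2.congr_deriv ?_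
      rw [hsplit]
      linear_combination ((1 - y) ^ (-α - 1)) * hODE y hy
    have hconst : (∑' k, g k x) * (1 - x) ^ (-α)
        = (∑' k, g k (0:ℝ)) * (1 - (0:ℝ)) ^ (-α) := by
      have hmvt := (convex_Ioo (-1:ℝ) 1).norm_image_sub_le_of_norm_hasDerivWithin_le
        (f := fun z => (∑' k, g k z) * (1 - z) ^ (-α)) (f' := fun _ => (0:ℝ)) (C := 0)
        (fun y hy => (hHderiv y hy).hasDerivWithinAt) (fun y _ => by simp) h0t hmem
      simp only [zero_mul, norm_le_zero_iff, sub_eq_zero] at hmvt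
      exact hmvt
    have hF0 : (∑' k, g k (0:ℝ)) = 1 := by
      rw [tsum_eq_single 0 (fun b hb => by simp [hgdef, zero_pow hb])]
      simp [hgdef, omegaCoeff_zero]
    have h1x : 0 < 1 - x := by linarith
    have hne : (1 - x) ^ α ≠ 0 := ne_of_gt (Real.rpow_pos_of_pos h1x α)
    have hFx : (∑' k, g k x) = (1 - x) ^ α := by
      have hinv : (1 - x) ^ (-α) = ((1 - x) ^ α)⁻¹ := Real.rpow_neg (le_of_lt h1x) α
      have hcc : (∑' k, g k x) * (1 - x) ^ (-α) = 1 := by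
        rw [hconst, hF0]
        norm_num
      rw [hinv] at hcc
      field_simp at hcc
      linarith
    have hhs := (summable_omega_pow hα1 hα2 hxabs).hasSum
    simp only [hgdef] at hFx
    rwa [hFx] at hhs

theorem stmt5 (α lam h γ₃ : ℝ) (hα1 : 1 < α) (hα2 : α < 2) (hlam : 0 ≤ lam) (hh : 0 < h)
    (γ₁ γ₂ : ℝ) (hγ₁ : γ₁ = α / 2 + γ₃) (hγ₂ : γ₂ = (2 - α) / 2 - 2 * γ₃) :
    HasSum (fun k : ℕ => gCoeff α lam h γ₁ γ₂ γ₃ k) (phiFun α lam h γ₁ γ₂ γ₃) := by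
  set x := Real.exp (-(h * lam)) with hxdef
  set e := Real.exp (h * lam) with hedef
  have hx0 : 0 < x := Real.exp_pos _
  have hx1 : x ≤ 1 := by
    rw [hxdef]
    calc Real.exp (-(h * lam)) ≤ Real.exp 0 := Real.exp_le_exp.mpr (by nlinarith)
      _ = 1 := Real.exp_zero
  have hex : e * x = 1 := by
    rw [hedef, hxdef, ← Real.exp_add]
    simp
  have hK := key hα1 hα2 hx0 hx1
  set S := (1 - x) ^ α with hSdef
  have hA : HasSum (fun k => γ₁ * e * (omegaCoeff α k * x ^ k)) (γ₁ * e * S) := hK.mul_left _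
  set B : ℕ → ℝ := fun k => if k = 0 then 0 else γ₂ * (omegaCoeff α (k-1) * x ^ (k-1))
    with hBdef
  have hB : HasSum B (γ₂ * S) := by
    have hinj : Function.Injective (fun n : ℕ => n + 1) := add_left_injective 1
    have hvanish : ∀ m, m ∉ Set.range (fun n : ℕ => n + 1) → B m = 0 := by
      intro m hm
      match m with
      | 0 => simp [hBdef]
      | (n+1) => exact absurd ⟨n, rfl⟩ hm
    apply (Function.Injective.hasSum_iff hinj hvanish).mp
    have hcomp : (B ∘ fun n : ℕ => n + 1) = fun k => γ₂ * (omegaCoeff α k * x ^ k) := by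
      funext n
      simp [hBdef]
    rw [hcomp]
    exact hK.mul_left _
  set C : ℕ → ℝ := fun k => if k ≤ 1 then 0 else γ₃ * x * (omegaCoeff α (k-2) * x ^ (k-2))
    with hCdef
  have hC : HasSum C (γ₃ * x * S) := by
    have hinj : Function.Injective (fun n : ℕ => n + 2) := add_left_injective 2
    have hvanish : ∀ m, m ∉ Set.range (fun n : ℕ => n + 2) → C m = 0 := by
      intro m hm
      match m with
      | 0 => simp [hCdef]
      | 1 => simp [hCdef]
      | (n+2) => exact absurd ⟨n, rfl⟩ hm
    apply (Function.Injective.hasSum_iff hinj hvanish).mp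
    have hcomp : (C ∘ fun n : ℕ => n + 2) = fun k => γ₃ * x * (omegaCoeff α k * x ^ k) := by
      funext n
      simp [hCdef]
    rw [hcomp]
    exact hK.mul_left _
  have htot := hA.add (hB.add hC)
  have hfun : (fun k => γ₁ * e * (omegaCoeff α k * x ^ k) + (B k + C k))
      = fun k => gCoeff α lam h γ₁ γ₂ γ₃ k := by
    funext k
    match k with
    | 0 =>
      simp only [hBdef, hCdef, gCoeff, if_pos rfl, pow_zero, mul_one]
      norm_num
      ring
    | 1 =>
      simp only [hBdef, hCdef, gCoeff]
      norm_num
      linear_combination (γ₁ * omegaCoeff α 1) * hex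
    | (n+2) =>
      have hexp : Real.exp ((1 - ((n:ℝ) + 2)) * h * lam) = x ^ (n+1) := by
        rw [hxdef, ← Real.exp_nat_mul]
        congr 1
        push_cast
        ring
      simp only [hBdef, hCdef, gCoeff]
      norm_num
      push_cast
      rw [hexp]
      linear_combination (γ₁ * omegaCoeff α (n+2) * x^(n+1)) * hex
  have hval : γ₁ * e * S + (γ₂ * S + γ₃ * x * S) = phiFun α lam h γ₁ γ₂ γ₃ := by
    simp only [phiFun, hSdef, hxdef, hedef]
    ring
  rw [hfun, hval] at htot
  exact htot
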